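/- Assume λ_A ≤ 0. Let (u, v) : [0, ∞) → ℝ² be a differentiable solution of the ODE system (S) with u(t) ≥ 0 and v(t) ≥ 0 for all t ≥ 0. Then (u(t), v(t)) converges to (0, 0) as t → +∞. -/

import Mathlib

open Set Filter

private lemma stmt14_antitone_aux {f f' : ℝ → ℝ}
    (hf : ∀ t ∈ Set.Ici (0:ℝ), HasDerivWithinAt f (f' t) (Set.Ici 0) t)
    (h0 : ∀ t ∈ Set.Ici (0:ℝ), f' t ≤ 0) : AntitoneOn f (Set.Ici 0) := by
  apply antitoneOn_of_deriv_nonpos (convex_Ici 0)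
  · exact fun t ht => (hf t ht).continuousWithinAt
  · intro x hx
    rw [interior_Ici] at hx
    exact ((hf x (Set.mem_Ici.mpr (le_of_lt hx))).hasDerivAt
      (Ici_mem_nhds hx)).differentiableAt.differentiableWithinAt
  · intro x hx
    rw [interior_Ici] at hx
    rw [((hf x (Set.mem_Ici.mpr (le_of_lt hx))).hasDerivAt (Ici_mem_nhds hx)).deriv]
    exact h0 x (Set.mem_Ici.mpr (le_of_lt hx))

private lemma stmt14_tendsto_zero_aux {f f' : ℝ → ℝ} {k : ℝ} (hk : 0 < k)
    (hf : ∀ t ∈ Set.Ici (0:ℝ), HasDerivWithinAt f (f' t) (Set.Ici 0) t)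
    (hnn : ∀ t ∈ Set.Ici (0:ℝ), 0 ≤ f t)
    (hle : ∀ t ∈ Set.Ici (0:ℝ), f' t ≤ -k * f t ^ 2) :
    Filter.Tendsto f Filter.atTop (nhds 0) := by
  have hanti : AntitoneOn f (Set.Ici 0) := stmt14_antitone_aux hf (fun t ht =>
    (hle t ht).trans (by nlinarith [sq_nonneg (f t)]))
  rw [Metric.tendsto_atTop]
  intro ε hε
  have hT : ∃ T, 0 ≤ T ∧ f T < ε := by
    by_contra h
    push_neg at h
    have hg : AntitoneOn (fun t => f t + (k * ε^2) * t) (Set.Ici 0) := by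
      apply stmt14_antitone_aux (f' := fun t => f' t + k * ε^2)
      · intro t ht
        have hid : HasDerivWithinAt (fun x : ℝ => (k * ε^2) * x) (k * ε^2)
            (Set.Ici 0) t := by
          simpa using (((hasDerivAt_id t).const_mul (k*ε^2)).hasDerivWithinAt
            (s := Set.Ici (0:ℝ)))
        exact (hf t ht).add hid
      · intro t ht
        have h1 := hle t ht
        have h2 := h t ht
        have h3 : ε^2 ≤ f t ^ 2 := by nlinarith
        have h4 : k * ε^2 ≤ k * f t ^ 2 := mul_le_mul_of_nonneg_left h3 hk.le
        linarith
    have hkε : 0 < k * ε^2 := by positivity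
    have h00 : (0:ℝ) ∈ Set.Ici (0:ℝ) := Set.mem_Ici.mpr le_rfl
    have hf0 : 0 ≤ f 0 := hnn 0 h00
    set t0 : ℝ := (f 0 + 1) / (k * ε^2) with ht0
    have ht0nn : 0 ≤ t0 := by positivity
    have hmem : t0 ∈ Set.Ici (0:ℝ) := ht0nn
    have hgle := hg h00 hmem ht0nn
    have hval : k * ε^2 * t0 = f 0 + 1 := by
      rw [ht0]; field_simp
    have hft0 := h t0 ht0nn
    simp only at hgle
    nlinarith
  obtain ⟨T, hT0, hTε⟩ := hT
  refine ⟨T, fun t ht => ?_⟩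
  have htnn : (0:ℝ) ≤ t := hT0.trans ht
  have h1 : f t ≤ f T := hanti hT0 htnn ht
  rw [Real.dist_eq, sub_zero, abs_of_nonneg (hnn t htnn)]
  exact lt_of_le_of_lt h1 hTε

set_option maxHeartbeats 1600000 in
/-- If λ_A ≤ 0, every nonnegative solution of (S) on [0, ∞)
converges to (0, 0) as t → +∞. -/
theorem stmt14 (ru rv κu κv μu μv : ℝ)
    (hκu : 0 < κu) (hκv : 0 < κv) (hμu : 0 < μu) (hμv : 0 < μv)
    (hlamA : (ru - μu + rv - μv +
      Real.sqrt ((ru - μu - rv + μv) ^ 2 + 4 * μu * μv)) / 2 ≤ 0)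
    (u v : ℝ → ℝ)
    (hu : ∀ t ∈ Set.Ici (0 : ℝ), HasDerivWithinAt u
      ((ru - κu * (u t + v t)) * u t + μv * v t - μu * u t) (Set.Ici 0) t)
    (hv : ∀ t ∈ Set.Ici (0 : ℝ), HasDerivWithinAt v
      ((rv - κv * (u t + v t)) * v t + μu * u t - μv * v t) (Set.Ici 0) t)
    (hnn : ∀ t : ℝ, 0 ≤ t → 0 ≤ u t ∧ 0 ≤ v t) :
    Filter.Tendsto (fun t => (u t, v t)) Filter.atTop (nhds ((0 : ℝ), (0 : ℝ))) := by
  obtain ⟨lam, hlam⟩ : ∃ l : ℝ, l = (ru - μu + rv - μv +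
      Real.sqrt ((ru - μu - rv + μv) ^ 2 + 4 * μu * μv)) / 2 := ⟨_, rfl⟩
  rw [← hlam] at hlamA
  have hsrt : 2 * lam - (ru - μu + rv - μv)
      = Real.sqrt ((ru - μu - rv + μv) ^ 2 + 4 * μu * μv) := by rw [hlam]; ring
  have hs2 : (2 * lam - (ru - μu + rv - μv)) ^ 2
      = (ru - μu - rv + μv) ^ 2 + 4 * μu * μv := by
    rw [hsrt]; exact Real.sq_sqrt (by positivity)
  obtain ⟨β, hβ_def⟩ : ∃ b : ℝ, b = lam - (ru - μu) := ⟨_, rfl⟩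
  have hβpos : 0 < β := by
    have habs : |ru - μu - rv + μv|
        < Real.sqrt ((ru - μu - rv + μv) ^ 2 + 4 * μu * μv) := by
      rw [← Real.sqrt_sq_eq_abs]
      exact Real.sqrt_lt_sqrt (sq_nonneg _) (by nlinarith)
    have h1 := le_abs_self (ru - μu - rv + μv)
    rw [hβ_def, hlam]
    linarith
  -- quadratic eigenvalue relation
  have heig2 : μu * μv + β * (rv - μv) = lam * β := by
    rw [hβ_def]
    linear_combination (-1/4 : ℝ) * hs2
  -- constants
  obtain ⟨M, hM_def⟩ : ∃ x : ℝ, x = max μu β := ⟨_, rfl⟩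
  obtain ⟨m, hm_def⟩ : ∃ x : ℝ, x = min (μu * κu) (β * κv) := ⟨_, rfl⟩
  have hMu : μu ≤ M := hM_def ▸ le_max_left _ _
  have hMβ : β ≤ M := hM_def ▸ le_max_right _ _
  have hMpos : 0 < M := lt_of_lt_of_le hμu hMu
  have hmu : m ≤ μu * κu := hm_def ▸ min_le_left _ _
  have hmv : m ≤ β * κv := hm_def ▸ min_le_right _ _
  have hmpos : 0 < m := hm_def ▸ lt_min (by positivity) (by positivity)
  obtain ⟨k, hk_def⟩ : ∃ x : ℝ, x = m / M ^ 2 := ⟨_, rfl⟩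
  have hkpos : 0 < k := hk_def ▸ by positivity
  -- Lyapunov function
  obtain ⟨L, hL_def⟩ : ∃ L : ℝ → ℝ, ∀ t, L t = μu * u t + β * v t :=
    ⟨_, fun _ => rfl⟩
  obtain ⟨D, hD_def⟩ : ∃ D : ℝ → ℝ, ∀ t, D t =
      μu * ((ru - κu * (u t + v t)) * u t + μv * v t - μu * u t) +
      β * ((rv - κv * (u t + v t)) * v t + μu * u t - μv * v t) :=
    ⟨_, fun _ => rfl⟩
  have hLderiv : ∀ t ∈ Set.Ici (0:ℝ), HasDerivWithinAt L (D t) (Set.Ici 0) t := by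
    intro t ht
    have h := ((hu t ht).const_mul μu).add ((hv t ht).const_mul β)
    rw [hD_def t]
    exact HasDerivWithinAt.congr h (fun x _ => (hL_def x).symm ▸ rfl)
      ((hL_def t).symm ▸ rfl)
  have hLnn : ∀ t ∈ Set.Ici (0:ℝ), 0 ≤ L t := by
    intro t ht
    obtain ⟨h1, h2⟩ := hnn t ht
    have := hβpos.le
    rw [hL_def t]
    positivity
  have hLle : ∀ t ∈ Set.Ici (0:ℝ), D t ≤ -k * L t ^ 2 := by
    intro t ht
    obtain ⟨hu0, hv0⟩ := hnn t ht
    have hD : D t = lam * L t - (μu * κu * u t + β * κv * v t) * (u t + v t) := by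
      rw [hD_def t, hL_def t]
      linear_combination v t * heig2 + (μu * u t) * hβ_def
    have hw0 : (0:ℝ) ≤ u t + v t := by linarith
    have hL0 : 0 ≤ L t := hLnn t ht
    have hLw : L t ≤ M * (u t + v t) := by
      rw [hL_def t]
      nlinarith [mul_nonneg (sub_nonneg.2 hMu) hu0, mul_nonneg (sub_nonneg.2 hMβ) hv0]
    have e1 : lam * L t ≤ 0 := mul_nonpos_of_nonpos_of_nonneg hlamA hL0
    have e2 : k * L t ^ 2 ≤ m * (u t + v t) ^ 2 := by
      have hLsq : L t ^ 2 ≤ (M * (u t + v t)) ^ 2 := pow_le_pow_left₀ hL0 hLw 2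
      have hkM : k * (M * (u t + v t)) ^ 2 = m * (u t + v t) ^ 2 := by
        rw [hk_def]; field_simp
      calc k * L t ^ 2 ≤ k * (M * (u t + v t)) ^ 2 :=
            mul_le_mul_of_nonneg_left hLsq hkpos.le
        _ = m * (u t + v t) ^ 2 := hkM
    have e3 : m * (u t + v t) ^ 2 ≤ (μu * κu * u t + β * κv * v t) * (u t + v t) := by
      nlinarith [mul_nonneg (mul_nonneg (sub_nonneg.2 hmu) hu0) hw0,
        mul_nonneg (mul_nonneg (sub_nonneg.2 hmv) hv0) hw0]
    rw [hD]
    linarith [e1, e2, e3]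
  have hLtends : Filter.Tendsto L Filter.atTop (nhds 0) :=
    stmt14_tendsto_zero_aux hkpos hLderiv hLnn hLle
  have hutends : Filter.Tendsto u Filter.atTop (nhds 0) := by
    have h1 : Filter.Tendsto (fun t => μu * u t) Filter.atTop (nhds 0) := by
      apply squeeze_zero' ?_ ?_ hLtends
      · filter_upwards [eventually_ge_atTop (0:ℝ)] with t ht
        exact mul_nonneg hμu.le (hnn t ht).1
      · filter_upwards [eventually_ge_atTop (0:ℝ)] with t ht
        have := mul_nonneg hβpos.le (hnn t ht).2
        rw [hL_def t]; linarith
    have h2 := h1.const_mul μu⁻¹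
    simpa [inv_mul_cancel_left₀ hμu.ne'] using h2
  have hvtends : Filter.Tendsto v Filter.atTop (nhds 0) := by
    have h1 : Filter.Tendsto (fun t => β * v t) Filter.atTop (nhds 0) := by
      apply squeeze_zero' ?_ ?_ hLtends
      · filter_upwards [eventually_ge_atTop (0:ℝ)] with t ht
        exact mul_nonneg hβpos.le (hnn t ht).2
      · filter_upwards [eventually_ge_atTop (0:ℝ)] with t ht
        have := mul_nonneg hμu.le (hnn t ht).1
        rw [hL_def t]; linarith
    have h2 := h1.const_mul β⁻¹
    simpa [inv_mul_cancel_left₀ hβpos.ne'] using h2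
  exact hutends.prodMk_nhds hvtends
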